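/- Let W = (W_1,…,W_T) ∈ {0,1}^T and X be random elements, let 𝒢 := σ(S, X) for a statistic S = S(W, X) such that W̄ := (1/T)·Σ_t W_t is 𝒢-measurable, and set f*_t := E[W_t | 𝒢]; suppose f*_t ≤ 1 − η almost surely for all t, for some η > 0. Define R(f) := E[(1/T)·Σ_{t=1}^T ρ_{W_t}(W_t − f_t)] and let 𝓕 be the class of f = (f_1,…,f_T) with f_t = g(W, X) + h_t(S, X) for bounded measurable functions g and h_t. Then f* = (f*_1,…,f*_T) belongs to 𝓕 and is the unique minimizer of R over 𝓕: R(f) > R(f*) for every f ∈ 𝓕 that differs from f* on a set of positive probability. -/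

import Mathlib

open MeasureTheory
open scoped BigOperators

/-- The loss `ρ_z(x) = x²·(1−z) + (max(x,0))²·z`. -/
noncomputable def drRho (z x : ℝ) : ℝ := x ^ 2 * (1 - z) + (max x 0) ^ 2 * z

open scoped Topology

/-- Doob–Dynkin factorization for real-valued functions. -/
lemma drDoobDynkin {α β : Type*} [mβ : MeasurableSpace β] (φ : α → β) (F : α → ℝ)
    (hF : Measurable[mβ.comap φ] F) : ∃ H : β → ℝ, Measurable H ∧ ∀ a, F a = H (φ a) := by
  classical
  have hSM : StronglyMeasurable[mβ.comap φ] F := hF.stronglyMeasurable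
  have hfac : ∀ s : @SimpleFunc α (mβ.comap φ) ℝ,
      ∃ H : β → ℝ, Measurable H ∧ ∀ a, s a = H (φ a) := by
    intro s
    refine @SimpleFunc.induction α ℝ (mβ.comap φ) _
      (fun s => ∃ H : β → ℝ, Measurable H ∧ ∀ a, s a = H (φ a)) ?_ ?_ s
    · intro c A hA
      obtain ⟨B, hB, hBA⟩ := hA
      refine ⟨B.indicator fun _ => c, measurable_const.indicator hB, fun a => ?_⟩
      have hmem : a ∈ A ↔ φ a ∈ B := by rw [← hBA]; rfl
      by_cases ha : a ∈ A
      · show (if a ∈ A then c else 0) = _; simp [ha, Set.indicator_of_mem (hmem.1 ha)]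
      · show (if a ∈ A then c else 0) = _; simp [ha, Set.indicator_of_notMem (fun hb => ha (hmem.2 hb))]
    · rintro f g - ⟨Hf, hHf, hf⟩ ⟨Hg, hHg, hg⟩
      exact ⟨Hf + Hg, hHf.add hHg, fun a => by simp [hf a, hg a]⟩
  choose Hn hHn hHn_eq using fun n => hfac (hSM.approx n)
  set E : Set β := {x | ∃ c : ℝ, Filter.Tendsto (fun n => Hn n x) Filter.atTop (𝓝 c)} with hE
  have hEmeas : MeasurableSet E := measurableSet_exists_tendsto hHn
  set H : β → ℝ := fun x => if hx : x ∈ E then hx.choose else 0 with hH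
  have htendsto : ∀ x, Filter.Tendsto (fun n => E.indicator (Hn n) x) Filter.atTop (𝓝 (H x)) := by
    intro x
    by_cases hx : x ∈ E
    · have := hx.choose_spec
      simpa [hH, hx, Set.indicator_of_mem hx] using this
    · simpa [hH, hx, Set.indicator_of_notMem hx] using tendsto_const_nhds
  have hHmeas : Measurable H := by
    refine measurable_of_tendsto_metrizable' Filter.atTop
      (fun n => (hHn n).indicator hEmeas) ?_
    rw [tendsto_pi_nhds]; exact htendsto
  refine ⟨H, hHmeas, fun a => ?_⟩
  have h1 : Filter.Tendsto (fun n => Hn n (φ a)) Filter.atTop (𝓝 (F a)) := by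
    have := hSM.tendsto_approx a
    simpa [fun n => hHn_eq n a] using this
  have hmemE : φ a ∈ E := ⟨F a, h1⟩
  have h2 : Filter.Tendsto (fun n => E.indicator (Hn n) (φ a)) Filter.atTop (𝓝 (F a)) := by
    simpa [Set.indicator_of_mem hmemE] using h1
  exact tendsto_nhds_unique h2 (htendsto (φ a))

lemma drIntBdd {Ω : Type*} {mΩ : MeasurableSpace Ω} {μ : Measure Ω} [IsFiniteMeasure μ]
    {F : Ω → ℝ} (hF : AEStronglyMeasurable F μ) {C : ℝ} (hb : ∀ᵐ ω ∂μ, |F ω| ≤ C) :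
    Integrable F μ :=
  Integrable.mono' (integrable_const C) hF (by simpa [Real.norm_eq_abs] using hb)

lemma drPullOut {Ω : Type*} {m0 : MeasurableSpace Ω} {μ : Measure Ω} [IsProbabilityMeasure μ]
    {m : MeasurableSpace Ω} (hm : m ≤ m0) {ψ Y : Ω → ℝ}
    (hψ : StronglyMeasurable[m] ψ) {Cψ : ℝ} (hψb : ∀ᵐ ω ∂μ, |ψ ω| ≤ Cψ)
    (hY : Integrable Y μ) :
    ∫ ω, ψ ω * (Y ω - (μ[Y|m]) ω) ∂μ = 0 := by
  have hψm0 : AEStronglyMeasurable[m0] ψ μ := (hψ.mono hm).aestronglyMeasurable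
  have hψb' : ∀ᵐ ω ∂μ, ‖ψ ω‖ ≤ Cψ := by simpa [Real.norm_eq_abs] using hψb
  have hint1 : Integrable (ψ * Y) μ := hY.bdd_mul hψm0 hψb'
  have hint2 : Integrable (fun ω => ψ ω * (μ[Y|m]) ω) μ :=
    (integrable_condExp).bdd_mul hψm0 hψb'
  have key : μ[ψ * Y|m] =ᵐ[μ] ψ * μ[Y|m] :=
    condExp_mul_of_stronglyMeasurable_left hψ hint1 hY
  have h1 : ∫ ω, ψ ω * Y ω ∂μ = ∫ ω, ψ ω * (μ[Y|m]) ω ∂μ := by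
    rw [show ∫ ω, ψ ω * Y ω ∂μ = ∫ ω, (ψ * Y) ω ∂μ from rfl, ← integral_condExp hm]
    exact integral_congr_ae key
  have heq : (fun ω => ψ ω * (Y ω - (μ[Y|m]) ω))
      = fun ω => ψ ω * Y ω - ψ ω * (μ[Y|m]) ω := by funext ω; ring
  rw [heq, integral_sub (show Integrable (fun ω => ψ ω * Y ω) μ from hint1) hint2, h1, sub_self]

/-- Core inequality. -/
lemma drCore {Ω : Type*} {m0 : MeasurableSpace Ω} (μ : Measure Ω) [IsProbabilityMeasure μ]
    {m : MeasurableSpace Ω} (hm : m ≤ m0)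
    (T : ℕ) (hT : 0 < T)
    (W : Ω → Fin T → ℝ) (hWt : ∀ t, Measurable[m0] fun ω => W ω t)
    (hW01 : ∀ ω t, W ω t = 0 ∨ W ω t = 1)
    (hWsum : Measurable[m] fun ω => ∑ t, W ω t)
    (η : ℝ) (hη : 0 < η)
    (hbdd : ∀ t, ∀ᵐ ω ∂μ, (μ[(fun ω' => W ω' t)|m]) ω ≤ 1 - η)
    (f : Fin T → Ω → ℝ) (G : Ω → ℝ) (Hh : Fin T → Ω → ℝ) (C' : ℝ) (hC0 : 0 ≤ C')
    (hGmeas : Measurable[m0] G) (hGb : ∀ ω, |G ω| ≤ C')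
    (hHm : ∀ t, Measurable[m] (Hh t)) (hHb : ∀ t ω, |Hh t ω| ≤ C')
    (hfeq : ∀ t ω, f t ω = G ω + Hh t ω)
    (hne : ¬ ∀ t, f t =ᵐ[μ] μ[(fun ω' => W ω' t)|m]) :
    ∫ ω, (1/(T:ℝ)) * ∑ t, drRho (W ω t) (W ω t - (μ[(fun ω' => W ω' t)|m]) ω) ∂μ
      < ∫ ω, (1/(T:ℝ)) * ∑ t, drRho (W ω t) (W ω t - f t ω) ∂μ := by
  classical
  set fs : Fin T → Ω → ℝ := fun t => μ[(fun ω' => W ω' t)|m] with hfsdef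
  have hWbd : ∀ ω t, 0 ≤ W ω t ∧ W ω t ≤ 1 := by
    intro ω t; rcases hW01 ω t with h | h <;> rw [h] <;> norm_num
  have hWint : ∀ t, Integrable (fun ω => W ω t) μ := by
    intro t
    exact drIntBdd (hWt t).aestronglyMeasurable (C := 1)
      (Filter.Eventually.of_forall fun ω =>
        abs_le.2 ⟨by linarith [(hWbd ω t).1], (hWbd ω t).2⟩)
  have hfs_sm : ∀ t, StronglyMeasurable[m] (fs t) := fun t => stronglyMeasurable_condExp
  have fsm : ∀ t, Measurable[m0] (fs t) := fun t => ((hfs_sm t).mono hm).measurable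
  have hfs_nn : ∀ t, 0 ≤ᵐ[μ] fs t := fun t =>
    condExp_nonneg (Filter.Eventually.of_forall fun ω => (hWbd ω t).1)
  have hfs_ub : ∀ t, ∀ᵐ ω ∂μ, fs t ω ≤ 1 - η := hbdd
  have hfs_bd : ∀ t, ∀ᵐ ω ∂μ, |fs t ω| ≤ 1 := by
    intro t
    filter_upwards [hfs_nn t, hfs_ub t] with ω h0 h1
    have h0' : (0:ℝ) ≤ fs t ω := h0
    exact abs_le.2 ⟨by linarith, by linarith⟩
  have hHm0 : ∀ t, Measurable[m0] (Hh t) := fun t => (hHm t).mono hm le_rfl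
  have hfmeas : ∀ t, Measurable[m0] (f t) := by
    intro t
    have hre : f t = fun ω => G ω + Hh t ω := funext fun ω => hfeq t ω
    rw [hre]; exact hGmeas.add (hHm0 t)
  have hfbd : ∀ t ω, |f t ω| ≤ 2 * C' := by
    intro t ω
    rw [hfeq t ω]
    calc |G ω + Hh t ω| ≤ |G ω| + |Hh t ω| := abs_add_le _ _
      _ ≤ 2 * C' := by have := hGb ω; have := hHb t ω; linarith
  set M : Fin T → Ω → ℝ := fun t ω => max (f t ω - 1) 0 with hM
  have hMmeas : ∀ t, Measurable[m0] (M t) := fun t =>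
    ((hfmeas t).sub measurable_const).max measurable_const
  have hMnn : ∀ t ω, 0 ≤ M t ω := fun t ω => le_max_right _ _
  have hMbd : ∀ t ω, M t ω ≤ 2 * C' + 1 := fun t ω =>
    max_le (by have := (abs_le.1 (hfbd t ω)).2; linarith) (by linarith)
  set ftil : Fin T → Ω → ℝ := fun t ω => f t ω - W ω t * M t ω with hftil
  have hftil_meas : ∀ t, Measurable[m0] (ftil t) := fun t =>
    (hfmeas t).sub ((hWt t).mul (hMmeas t))
  have hftil_bd : ∀ t ω, |ftil t ω| ≤ 4 * C' + 1 := by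
    intro t ω
    have h1 := abs_le.1 (hfbd t ω)
    have h2 := hWbd ω t
    have h3 := hMnn t ω
    have h4 := hMbd t ω
    have h5 : 0 ≤ W ω t * M t ω := mul_nonneg h2.1 h3
    have h6 : W ω t * M t ω ≤ 2 * C' + 1 := by nlinarith
    exact abs_le.2 ⟨by simp only [hftil]; nlinarith, by simp only [hftil]; nlinarith⟩
  have sqbd : ∀ x c : ℝ, |x| ≤ c → |x ^ 2| ≤ c ^ 2 := fun x c hx => by
    rw [abs_pow]; exact pow_le_pow_left₀ (abs_nonneg _) hx 2
  have mulbd : ∀ x y cx cy : ℝ, |x| ≤ cx → |y| ≤ cy → |x * y| ≤ cx * cy := by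
    intro x y cx cy hx hy
    rw [abs_mul]
    exact mul_le_mul hx hy (abs_nonneg _) ((abs_nonneg _).trans hx)
  set A : Fin T → Ω → ℝ := fun t ω => (W ω t - fs t ω) ^ 2 with hA
  set Bq : Fin T → Ω → ℝ := fun t ω => (ftil t ω - fs t ω) ^ 2 with hBq
  set K : Fin T → Ω → ℝ := fun t ω => W ω t * (1 - fs t ω) * M t ω with hK
  -- integrability
  have hA_int : ∀ t, Integrable (A t) μ := by
    intro t
    refine drIntBdd (((hWt t).sub (fsm t)).pow_const 2).aestronglyMeasurable (C := 2 ^ 2) ?_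
    filter_upwards [hfs_bd t] with ω hb
    have h2 := abs_le.1 hb
    have h3 := hWbd ω t
    exact sqbd _ _ (abs_le.2 ⟨by linarith, by linarith⟩)
  have hB_int : ∀ t, Integrable (Bq t) μ := by
    intro t
    refine drIntBdd (((hftil_meas t).sub (fsm t)).pow_const 2).aestronglyMeasurable
      (C := (4 * C' + 2) ^ 2) ?_
    filter_upwards [hfs_bd t] with ω hb
    have h1 := abs_le.1 (hftil_bd t ω)
    have h2 := abs_le.1 hb
    exact sqbd _ _ (abs_le.2 ⟨by linarith, by linarith⟩)
  have hK_int : ∀ t, Integrable (K t) μ := by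
    intro t
    refine drIntBdd (((hWt t).mul (measurable_const.sub (fsm t))).mul
      (hMmeas t)).aestronglyMeasurable (C := (1 * 2) * (2 * C' + 1)) ?_
    filter_upwards [hfs_bd t] with ω hb
    have h2 := abs_le.1 hb
    have h3 := hWbd ω t
    refine mulbd _ _ _ _ (mulbd _ _ _ _ (abs_le.2 ⟨by linarith, h3.2⟩)
      (abs_le.2 ⟨by linarith, by linarith⟩)) (abs_le.2 ⟨by linarith [hMnn t ω], hMbd t ω⟩)
  have hWfs_bd : ∀ t, ∀ᵐ ω ∂μ, |W ω t - fs t ω| ≤ 2 := by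
    intro t
    filter_upwards [hfs_bd t] with ω hb
    have h2 := abs_le.1 hb
    have h3 := hWbd ω t
    exact abs_le.2 ⟨by linarith, by linarith⟩
  have hWfsG_int : ∀ t, Integrable (fun ω => (W ω t - fs t ω) * G ω) μ := by
    intro t
    refine drIntBdd (((hWt t).sub (fsm t)).mul hGmeas).aestronglyMeasurable
      (C := 2 * C') ?_
    filter_upwards [hWfs_bd t] with ω hb
    exact mulbd _ _ _ _ hb (hGb _)
  have hPull_int : ∀ t, Integrable (fun ω => (Hh t ω - fs t ω) * (W ω t - fs t ω)) μ := by
    intro t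
    refine drIntBdd (((hHm0 t).sub (fsm t)).mul ((hWt t).sub (fsm t))).aestronglyMeasurable
      (C := (C' + 1) * 2) ?_
    filter_upwards [hfs_bd t, hWfs_bd t] with ω hb hb2
    have h2 := abs_le.1 hb
    have h3 := abs_le.1 (hHb t ω)
    exact mulbd _ _ _ _ (abs_le.2 ⟨by linarith, by linarith⟩) hb2
  have hcross_int : ∀ t, Integrable (fun ω => (W ω t - fs t ω) * (ftil t ω - fs t ω)) μ := by
    intro t
    refine drIntBdd (((hWt t).sub (fsm t)).mul
      ((hftil_meas t).sub (fsm t))).aestronglyMeasurable (C := 2 * (4 * C' + 2)) ?_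
    filter_upwards [hWfs_bd t, hfs_bd t] with ω hb hb2
    have h1 := abs_le.1 (hftil_bd t ω)
    have h2 := abs_le.1 hb2
    exact mulbd _ _ _ _ hb (abs_le.2 ⟨by linarith, by linarith⟩)
  have hWftil_int : ∀ t, Integrable (fun ω => (W ω t - ftil t ω) ^ 2) μ := by
    intro t
    refine drIntBdd (((hWt t).sub (hftil_meas t)).pow_const 2).aestronglyMeasurable
      (C := (4 * C' + 2) ^ 2) ?_
    refine Filter.Eventually.of_forall fun ω => ?_
    have h1 := abs_le.1 (hftil_bd t ω)
    have h3 := hWbd ω t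
    exact sqbd _ _ (abs_le.2 ⟨by linarith, by linarith⟩)
  -- LHS and RHS rewrites
  have hLHS : ∫ ω, (1/(T:ℝ)) * ∑ t, drRho (W ω t) (W ω t - fs t ω) ∂μ
      = (1/(T:ℝ)) * ∑ t, ∫ ω, A t ω ∂μ := by
    have hae : ∀ᵐ ω ∂μ, ∀ t, fs t ω ≤ 1 - η := (ae_all_iff).2 hbdd
    have h1 : (fun ω => (1/(T:ℝ)) * ∑ t, drRho (W ω t) (W ω t - fs t ω))
        =ᵐ[μ] fun ω => (1/(T:ℝ)) * ∑ t, A t ω := by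
      filter_upwards [hae] with ω hω
      congr 1
      refine Finset.sum_congr rfl fun t _ => ?_
      rcases hW01 ω t with h | h
      · simp only [drRho, h, hA]; ring
      · simp only [drRho, h, hA]
        rw [max_eq_left (by linarith [hω t] : (0:ℝ) ≤ 1 - fs t ω)]
        ring
    rw [integral_congr_ae h1, integral_const_mul, integral_finset_sum _ fun t _ => hA_int t]
  have hRHS : ∫ ω, (1/(T:ℝ)) * ∑ t, drRho (W ω t) (W ω t - f t ω) ∂μ
      = (1/(T:ℝ)) * ∑ t, ∫ ω, (W ω t - ftil t ω) ^ 2 ∂μ := by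
    have h1 : ∀ ω, (1/(T:ℝ)) * ∑ t, drRho (W ω t) (W ω t - f t ω)
        = (1/(T:ℝ)) * ∑ t, (W ω t - ftil t ω) ^ 2 := by
      intro ω; congr 1; refine Finset.sum_congr rfl fun t _ => ?_
      rcases hW01 ω t with h | h
      · simp only [drRho, h, hftil, hM]; ring
      · simp only [drRho, h, hftil, hM]
        rcases le_total (f t ω) 1 with hf | hf
        · rw [max_eq_right (by linarith : f t ω - 1 ≤ (0:ℝ)),
            max_eq_left (by linarith : (0:ℝ) ≤ 1 - f t ω)]
          ring
        · rw [max_eq_left (by linarith : (0:ℝ) ≤ f t ω - 1),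
            max_eq_right (by linarith : 1 - f t ω ≤ (0:ℝ))]
          ring
    rw [integral_congr_ae (Filter.Eventually.of_forall h1), integral_const_mul,
      integral_finset_sum _ fun t _ => hWftil_int t]
  -- pull-out: the Hh-part of the cross term vanishes
  have hPull : ∀ t, ∫ ω, (Hh t ω - fs t ω) * (W ω t - fs t ω) ∂μ = 0 := by
    intro t
    have hψ : StronglyMeasurable[m] (fun ω => Hh t ω - fs t ω) :=
      ((hHm t).stronglyMeasurable).sub (hfs_sm t)
    have hψb : ∀ᵐ ω ∂μ, |Hh t ω - fs t ω| ≤ C' + 1 := by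
      filter_upwards [hfs_bd t] with ω hb
      have h2 := abs_le.1 hb
      have h3 := abs_le.1 (hHb t ω)
      exact abs_le.2 ⟨by linarith, by linarith⟩
    exact drPullOut hm hψ hψb (hWint t)
  -- cross term decomposition
  have hcross_eq : ∀ t, ∫ ω, (W ω t - fs t ω) * (ftil t ω - fs t ω) ∂μ
      = ∫ ω, (W ω t - fs t ω) * G ω ∂μ - ∫ ω, K t ω ∂μ := by
    intro t
    have hpt : ∀ ω, (W ω t - fs t ω) * (ftil t ω - fs t ω)
        = (W ω t - fs t ω) * G ω + ((Hh t ω - fs t ω) * (W ω t - fs t ω) - K t ω) := by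
      intro ω
      have hW2 : W ω t ^ 2 = W ω t := by rcases hW01 ω t with h | h <;> rw [h] <;> ring
      simp only [hftil, hK]
      rw [hfeq t ω]
      linear_combination (-(M t ω)) * hW2
    have i1 : Integrable (fun ω => (Hh t ω - fs t ω) * (W ω t - fs t ω) - K t ω) μ :=
      (hPull_int t).sub (hK_int t)
    rw [integral_congr_ae (Filter.Eventually.of_forall hpt), integral_add (hWfsG_int t) i1,
      integral_sub (hPull_int t) (hK_int t), hPull t]
    ring
  -- per-t decomposition of the J integrals
  have hJ : ∀ t, ∫ ω, (W ω t - ftil t ω) ^ 2 ∂μ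
      = ∫ ω, A t ω ∂μ + (∫ ω, Bq t ω ∂μ + 2 * ∫ ω, K t ω ∂μ)
        - 2 * ∫ ω, (W ω t - fs t ω) * G ω ∂μ := by
    intro t
    have hpt : ∀ ω, (W ω t - ftil t ω) ^ 2
        = (A t ω + Bq t ω) - 2 * ((W ω t - fs t ω) * (ftil t ω - fs t ω)) := by
      intro ω; simp only [hA, hBq]; ring
    have i2 : Integrable (fun ω => A t ω + Bq t ω) μ := (hA_int t).add (hB_int t)
    have i3 : Integrable (fun ω => 2 * ((W ω t - fs t ω) * (ftil t ω - fs t ω))) μ :=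
      (hcross_int t).const_mul 2
    rw [integral_congr_ae (Filter.Eventually.of_forall hpt), integral_sub i2 i3,
      integral_add (hA_int t) (hB_int t), integral_const_mul, hcross_eq t]
    ring
  -- the G-terms sum to zero
  have hsum0 : (fun ω => ∑ t, (W ω t - fs t ω)) =ᵐ[μ] 0 := by
    have hWsum_int : Integrable (fun ω => ∑ t, W ω t) μ :=
      integrable_finset_sum _ fun t _ => hWint t
    have h2 : μ[(fun ω => ∑ t, W ω t)|m] = fun ω => ∑ t, W ω t :=
      condExp_of_stronglyMeasurable hm hWsum.stronglyMeasurable hWsum_int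
    have hfsum : (∑ t : Fin T, (fun ω => W ω t)) = fun ω => ∑ t, W ω t := by
      funext ω; simp [Finset.sum_apply]
    have h3 := condExp_finsetSum (μ := μ) (m := m) (s := Finset.univ)
      (f := fun (t : Fin T) (ω : Ω) => W ω t) (fun i _ => hWint i)
    rw [hfsum, h2] at h3
    have h5 : (∑ t : Fin T, μ[(fun ω => W ω t)|m]) = fun ω => ∑ t, fs t ω := by
      funext ω; simp [Finset.sum_apply, hfsdef]
    rw [h5] at h3
    filter_upwards [h3] with ω hω
    have hω' : ∑ t, W ω t = ∑ t, fs t ω := hω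
    simp only [Finset.sum_sub_distrib, Pi.zero_apply]
    rw [hω']; ring
  have hGsum : ∑ t : Fin T, ∫ ω, (W ω t - fs t ω) * G ω ∂μ = 0 := by
    rw [← integral_finset_sum _ fun t _ => hWfsG_int t]
    have hz : (fun ω => ∑ t, (W ω t - fs t ω) * G ω) =ᵐ[μ] 0 := by
      filter_upwards [hsum0] with ω hω
      have hω' : ∑ t, (W ω t - fs t ω) = 0 := hω
      simp only [Pi.zero_apply, ← Finset.sum_mul, hω', zero_mul]
    rw [integral_congr_ae hz]; simp
  -- positivity
  have hB_nn : ∀ t, 0 ≤ ∫ ω, Bq t ω ∂μ := fun t =>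
    integral_nonneg fun ω => by simp only [hBq]; positivity
  have hK_ae_nn : ∀ t, 0 ≤ᵐ[μ] K t := by
    intro t
    filter_upwards [hfs_ub t] with ω hub
    have h3 := hWbd ω t
    have h5 := hMnn t ω
    have h4 : 0 ≤ 1 - fs t ω := by linarith
    simp only [hK, Pi.zero_apply]
    exact mul_nonneg (mul_nonneg h3.1 h4) h5
  have hK_nn : ∀ t, 0 ≤ ∫ ω, K t ω ∂μ := fun t => integral_nonneg_of_ae (hK_ae_nn t)
  push_neg at hne
  obtain ⟨t0, ht0⟩ := hne
  have hD0 : 0 < ∫ ω, Bq t0 ω ∂μ + 2 * ∫ ω, K t0 ω ∂μ := by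
    rcases lt_or_ge 0 (∫ ω, Bq t0 ω ∂μ + 2 * ∫ ω, K t0 ω ∂μ) with hlt | hle
    · exact hlt
    exfalso
    have hB0 : ∫ ω, Bq t0 ω ∂μ = 0 := le_antisymm (by linarith [hK_nn t0]) (hB_nn t0)
    have hK0 : ∫ ω, K t0 ω ∂μ = 0 := le_antisymm (by linarith [hB_nn t0]) (hK_nn t0)
    have hBae : Bq t0 =ᵐ[μ] 0 :=
      (integral_eq_zero_iff_of_nonneg_ae
        (Filter.Eventually.of_forall fun ω => by simp only [hBq, Pi.zero_apply]; positivity)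
        (hB_int t0)).1 hB0
    have hKae : K t0 =ᵐ[μ] 0 :=
      (integral_eq_zero_iff_of_nonneg_ae (hK_ae_nn t0) (hK_int t0)).1 hK0
    apply ht0
    filter_upwards [hBae, hKae, hfs_ub t0] with ω hBω hKω hub
    show f t0 ω = fs t0 ω
    have hb0 : (ftil t0 ω - fs t0 ω) ^ 2 = 0 := by
      have := hBω; simpa [hBq] using this
    have h1 : ftil t0 ω = fs t0 ω :=
      sub_eq_zero.1 ((pow_eq_zero_iff (by norm_num : (2:ℕ) ≠ 0)).1 hb0)
    have hk0 : W ω t0 * (1 - fs t0 ω) * M t0 ω = 0 := by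
      have := hKω; simpa [hK] using this
    have h2 : W ω t0 * M t0 ω = 0 := by
      rcases hW01 ω t0 with h | h
      · rw [h, zero_mul]
      · rw [h, one_mul] at hk0 ⊢
        have hpos : 0 < 1 - fs t0 ω := by linarith
        rcases mul_eq_zero.1 hk0 with h' | h'
        · exact absurd h' (ne_of_gt hpos)
        · exact h'
    have h3 : f t0 ω = ftil t0 ω := by
      simp only [hftil]; rw [h2, sub_zero]
    rw [h3, h1]
  -- final assembly
  have hratpos : (0:ℝ) < 1/(T:ℝ) := by
    have hT' : (0:ℝ) < (T:ℝ) := by exact_mod_cast hT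
    positivity
  have hDsum : 0 < ∑ t : Fin T, (∫ ω, Bq t ω ∂μ + 2 * ∫ ω, K t ω ∂μ) :=
    Finset.sum_pos' (fun t _ => by linarith [hB_nn t, hK_nn t])
      ⟨t0, Finset.mem_univ _, hD0⟩
  have hsum_eq : ∑ t : Fin T, ∫ ω, (W ω t - ftil t ω) ^ 2 ∂μ
      = (∑ t : Fin T, ∫ ω, A t ω ∂μ)
        + ∑ t : Fin T, (∫ ω, Bq t ω ∂μ + 2 * ∫ ω, K t ω ∂μ) := by
    rw [Finset.sum_congr rfl fun t _ => hJ t, Finset.sum_sub_distrib,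
      Finset.sum_add_distrib, ← Finset.mul_sum, hGsum, mul_zero, sub_zero]
  have final : ∫ ω, (1/(T:ℝ)) * ∑ t, drRho (W ω t) (W ω t - fs t ω) ∂μ
      < ∫ ω, (1/(T:ℝ)) * ∑ t, drRho (W ω t) (W ω t - f t ω) ∂μ := by
    rw [hLHS, hRHS, hsum_eq, mul_add]
    have hmp := mul_pos hratpos hDsum
    linarith
  exact final
/-- **The conditional mean is the unique minimizer of the population loss.**
With `𝒢 = σ(S, X)`, `f*_t = E[W_t | 𝒢]` and `f*_t ≤ 1 − η` a.s., the vector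
`f*` belongs (up to a.e. equality) to the class `𝓕` of processes of the form
`f_t = g(W,X) + h_t(S,X)` with bounded measurable `g, h_t`, and it is the
unique minimizer of `R(f) = E[(1/T)·Σ_t ρ_{W_t}(W_t − f_t)]` over `𝓕`:
`R(f) > R(f*)` for every `f ∈ 𝓕` differing from `f*` on a set of positive
probability. -/
theorem conditional_mean_unique_minimizer
    {Ωs 𝒳 𝕊 : Type*} [MeasurableSpace Ωs] [MeasurableSpace 𝒳] [MeasurableSpace 𝕊]
    (μ : Measure Ωs) [IsProbabilityMeasure μ]
    (T : ℕ) (hT : 0 < T)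
    (W : Ωs → Fin T → ℝ) (hWmeas : Measurable W)
    (hW01 : ∀ ω t, W ω t = 0 ∨ W ω t = 1)
    (X : Ωs → 𝒳) (hX : Measurable X)
    (S : Ωs → 𝕊) (hS : Measurable S)
    -- S is a statistic of (W, X)
    (hSstat : @Measurable Ωs 𝕊
      (MeasurableSpace.comap (fun ω => (W ω, X ω)) inferInstance) _ S)
    -- W̄ is 𝒢 = σ(S,X)-measurable
    (hWbar : @Measurable Ωs ℝ
      (MeasurableSpace.comap (fun ω => (S ω, X ω)) inferInstance) _
      (fun ω => (1 / (T : ℝ)) * ∑ t, W ω t))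
    (η : ℝ) (hη : 0 < η)
    -- f*_t = E[W_t | 𝒢] ≤ 1 − η a.s.
    (hbdd : ∀ t, ∀ᵐ ω ∂μ,
      (μ[(fun ω' => W ω' t) |
        MeasurableSpace.comap (fun ω'' => (S ω'', X ω'')) inferInstance]) ω ≤ 1 - η) :
    -- f* belongs to 𝓕 (up to a.e. equality)
    (∃ (g : (Fin T → ℝ) × 𝒳 → ℝ) (h : Fin T → 𝕊 × 𝒳 → ℝ) (C : ℝ),
        Measurable g ∧ (∀ t, Measurable (h t)) ∧
        (∀ x, |g x| ≤ C) ∧ (∀ t x, |h t x| ≤ C) ∧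
        (∀ t, (fun ω => g (W ω, X ω) + h t (S ω, X ω)) =ᵐ[μ]
          μ[(fun ω' => W ω' t) |
            MeasurableSpace.comap (fun ω'' => (S ω'', X ω'')) inferInstance])) ∧
    -- and f* is the unique minimizer of R over 𝓕
    (∀ f : Fin T → Ωs → ℝ,
      (∃ (g : (Fin T → ℝ) × 𝒳 → ℝ) (h : Fin T → 𝕊 × 𝒳 → ℝ) (C : ℝ),
        Measurable g ∧ (∀ t, Measurable (h t)) ∧
        (∀ x, |g x| ≤ C) ∧ (∀ t x, |h t x| ≤ C) ∧
        (∀ t ω, f t ω = g (W ω, X ω) + h t (S ω, X ω))) →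
      ¬ (∀ t, f t =ᵐ[μ]
          μ[(fun ω' => W ω' t) |
            MeasurableSpace.comap (fun ω'' => (S ω'', X ω'')) inferInstance]) →
      ∫ ω, (1 / (T : ℝ)) * ∑ t,
          drRho (W ω t) (W ω t -
            (μ[(fun ω' => W ω' t) |
              MeasurableSpace.comap (fun ω'' => (S ω'', X ω'')) inferInstance]) ω) ∂μ
        < ∫ ω, (1 / (T : ℝ)) * ∑ t, drRho (W ω t) (W ω t - f t ω) ∂μ) := by
    classical
  have hWbd : ∀ ω t, 0 ≤ W ω t ∧ W ω t ≤ 1 := by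
    intro ω t; rcases hW01 ω t with hc | hc <;> rw [hc] <;> norm_num
  constructor
  · -- membership of the conditional mean in the class
    have hexists : ∀ t : Fin T, ∃ H : 𝕊 × 𝒳 → ℝ, Measurable H ∧
        ∀ ω, (μ[(fun ω' => W ω' t) |
          MeasurableSpace.comap (fun ω'' => (S ω'', X ω'')) inferInstance]) ω
          = H (S ω, X ω) := by
      intro t
      exact drDoobDynkin (fun ω'' => (S ω'', X ω'')) _
        ((stronglyMeasurable_condExp
          (m := MeasurableSpace.comap (fun ω'' => (S ω'', X ω'')) inferInstance)).measurable)
    choose Hc hHcmeas hHceq using hexists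
    refine ⟨fun _ => 0, fun t x => max 0 (min 1 (Hc t x)), 1, measurable_const,
      fun t => measurable_const.max (measurable_const.min (hHcmeas t)),
      fun x => by norm_num, fun t x => ?_, fun t => ?_⟩
    · have h1 : max 0 (min 1 (Hc t x)) ≤ 1 := max_le zero_le_one (min_le_left _ _)
      have h0 : (0:ℝ) ≤ max 0 (min 1 (Hc t x)) := le_max_left _ _
      exact abs_le.2 ⟨by linarith, h1⟩
    · have h0 : 0 ≤ᵐ[μ] μ[(fun ω' => W ω' t) |
          MeasurableSpace.comap (fun ω'' => (S ω'', X ω'')) inferInstance] :=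
        condExp_nonneg (Filter.Eventually.of_forall fun ω => (hWbd ω t).1)
      filter_upwards [h0, hbdd t] with ω h0ω h1ω
      have hle1 : (μ[(fun ω' => W ω' t) |
          MeasurableSpace.comap (fun ω'' => (S ω'', X ω'')) inferInstance]) ω ≤ 1 := by
        linarith
      have h0' : (0:ℝ) ≤ (μ[(fun ω' => W ω' t) |
          MeasurableSpace.comap (fun ω'' => (S ω'', X ω'')) inferInstance]) ω := h0ω
      rw [zero_add, ← hHceq t ω, min_eq_right hle1, max_eq_right h0']
  · -- uniqueness of the minimizer
    rintro f ⟨g, h, C, hg, hh, hgb, hhb, hfeq⟩ hne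
    have hWsum : Measurable[MeasurableSpace.comap (fun ω'' => (S ω'', X ω'')) inferInstance]
        (fun ω => ∑ t, W ω t) := by
      have hsum : (fun ω => ∑ t, W ω t)
          = fun ω => (T:ℝ) * ((1/(T:ℝ)) * ∑ t, W ω t) := by
        funext ω
        have hT' : (T:ℝ) ≠ 0 := Nat.cast_ne_zero.2 hT.ne'
        field_simp
      rw [hsum]
      exact hWbar.const_mul (T:ℝ)
    exact drCore μ ((hS.prodMk hX).comap_le) T hT W
      (fun t => (measurable_pi_apply t).comp hWmeas) hW01 hWsum η hη hbdd f
      (fun ω => g (W ω, X ω)) (fun t ω => h t (S ω, X ω)) (max C 0) (le_max_right _ _)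
      (hg.comp (hWmeas.prodMk hX)) (fun ω => (hgb _).trans (le_max_left _ _))
      (fun t => (hh t).comp (comap_measurable _))
      (fun t ω => (hhb t _).trans (le_max_left _ _)) hfeq hne
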